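/- Let φ, φ^ex : Ω → ℝ and Ψ, Ψ_h : Γ₁ → Ω with φ ∘ Ψ = I_hφ on Γ₁ (a set), where I_hφ : Γ₁ → ℝ satisfies I_hφ = 0 on Γ₁. Assume (i) sup_{Ω^Γ} |φ^ex − φ| ≤ c₁ h^{k+1}, (ii) φ is Lipschitz on Ω^Γ with Lipschitz constant L, (iii) sup_{Γ₁} ‖Ψ − Ψ_h‖₂ ≤ c₂ h^{k+1}, and (iv) Ψ(Γ₁) ⊆ Ω^Γ and Ψ_h(Γ₁) ⊆ Ω^Γ. Then sup_{x ∈ Γ₁} |φ^ex(Ψ_h(x))| ≤ (c₁ + L c₂) h^{k+1}. -/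
import Mathlib

/-- The central error estimate. Assume `φ ∘ Ψ = I_hφ` on `Γ₁`, `I_hφ = 0`
on `Γ₁`, `sup_{Ω^Γ} |φ^ex − φ| ≤ c₁ h^{k+1}`, `φ` is `L`-Lipschitz on `Ω^Γ`,
`sup_{Γ₁} ‖Ψ − Ψ_h‖ ≤ c₂ h^{k+1}`, and `Ψ(Γ₁), Ψ_h(Γ₁) ⊆ Ω^Γ`. Then
`sup_{x ∈ Γ₁} |φ^ex(Ψ_h(x))| ≤ (c₁ + L c₂) h^{k+1}`. -/
theorem stmt7 {n : ℕ} (Γ₁ ΩΓ : Set (EuclideanSpace ℝ (Fin n)))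
    (φ φex Ihφ : EuclideanSpace ℝ (Fin n) → ℝ)
    (Ψ Ψh : EuclideanSpace ℝ (Fin n) → EuclideanSpace ℝ (Fin n))
    (c₁ c₂ h : ℝ) (k : ℕ) (L : NNReal)
    (hΨ : ∀ x ∈ Γ₁, φ (Ψ x) = Ihφ x)
    (hIh : ∀ x ∈ Γ₁, Ihφ x = 0)
    (happrox : ∀ y ∈ ΩΓ, |φex y - φ y| ≤ c₁ * h ^ (k + 1))
    (hlip : LipschitzOnWith L φ ΩΓ)
    (hclose : ∀ x ∈ Γ₁, ‖Ψ x - Ψh x‖ ≤ c₂ * h ^ (k + 1))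
    (hmap : ∀ x ∈ Γ₁, Ψ x ∈ ΩΓ) (hmaph : ∀ x ∈ Γ₁, Ψh x ∈ ΩΓ) :
    ∀ x ∈ Γ₁, |φex (Ψh x)| ≤ (c₁ + (L : ℝ) * c₂) * h ^ (k + 1) := by
  intro x hx
  have h0 : φ (Ψ x) = 0 := (hΨ x hx).trans (hIh x hx)
  have h1 : |φex (Ψh x) - φ (Ψh x)| ≤ c₁ * h ^ (k + 1) := happrox _ (hmaph x hx)
  have h2 : |φ (Ψh x) - φ (Ψ x)| ≤ (L : ℝ) * (c₂ * h ^ (k + 1)) := by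
    have := hlip.dist_le_mul _ (hmaph x hx) _ (hmap x hx)
    rw [Real.dist_eq] at this
    refine this.trans (mul_le_mul_of_nonneg_left ?_ L.coe_nonneg)
    rw [dist_eq_norm, ← norm_neg]
    simpa using hclose x hx
  calc |φex (Ψh x)| = |(φex (Ψh x) - φ (Ψh x)) + (φ (Ψh x) - φ (Ψ x))| := by
        rw [h0]; ring_nf
    _ ≤ |φex (Ψh x) - φ (Ψh x)| + |φ (Ψh x) - φ (Ψ x)| := abs_add_le _ _
    _ ≤ c₁ * h ^ (k + 1) + (L : ℝ) * (c₂ * h ^ (k + 1)) := add_le_add h1 h2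
    _ = (c₁ + (L : ℝ) * c₂) * h ^ (k + 1) := by ring
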